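/- Let (X,B,μ) be a measure space and q a lower bounded quadratic form on L²(X,μ) satisfying the first Beurling–Deny criterion, with lower bound −λ. Fix μ' ≥ λ and set ‖f‖_q² = q(f) + μ'‖f‖²_{L²}. If f, g ∈ D(q) are real-valued, then f ∧ g := min{f,g} ∈ D(q) and ‖f ∧ g‖_q² ≤ ‖f‖_q² + ‖g‖_q². -/

import Mathlib

open MeasureTheory
open scoped ComplexInnerProductSpace

noncomputable section

/-- A (densely defined) quadratic form on a complex Hilbert space `H`: a dense domain
`dom` and a map `Q` which, on the domain, is absolutely homogeneous of degree two and
satisfies the parallelogram identity. (The values of `Q` outside of `dom` are irrelevant.) -/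
structure QForm (H : Type*) [NormedAddCommGroup H] [InnerProductSpace ℂ H] where
  dom : Submodule ℂ H
  dense_dom : Dense (dom : Set H)
  Q : H → ℝ
  smul_eq : ∀ (a : ℂ), ∀ f ∈ dom, Q (a • f) = ‖a‖ ^ 2 * Q f
  parallelogram : ∀ f ∈ dom, ∀ g ∈ dom, Q (f + g) + Q (f - g) = 2 * Q f + 2 * Q g

/-- The squared form norm `‖f‖_q² = q(f) + μ'·‖f‖²` of a quadratic form, for a shift `μ'`. -/
def QForm.normSq {H : Type*} [NormedAddCommGroup H] [InnerProductSpace ℂ H]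
    (q : QForm H) (μ' : ℝ) (f : H) : ℝ :=
  q.Q f + μ' * ‖f‖ ^ 2

/-- A quadratic form on `L²(X,μ)` is real if the domain is conjugation invariant and
`q(conj f) = q(f)`. -/
def QForm.IsReal {X : Type*} [MeasurableSpace X] {μ : Measure X}
    (q : QForm (Lp ℂ 2 μ)) : Prop :=
  ∀ f ∈ q.dom, ∃ g ∈ q.dom,
    (∀ᵐ x ∂μ, g x = (starRingEnd ℂ) (f x)) ∧ q.Q g = q.Q f

/-- The first Beurling–Deny criterion for a quadratic form on `L²(X,μ)`: the form is real,
and `f ∈ D(q)` implies `|f| ∈ D(q)` with `q(|f|) ≤ q(f)`. -/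
def QForm.BeurlingDeny {X : Type*} [MeasurableSpace X] {μ : Measure X}
    (q : QForm (Lp ℂ 2 μ)) : Prop :=
  q.IsReal ∧ ∀ f ∈ q.dom, ∃ g ∈ q.dom,
    (∀ᵐ x ∂μ, g x = (‖f x‖ : ℂ)) ∧ q.Q g ≤ q.Q f

end

/-- Let `q` be a lower bounded quadratic form on `L²(X,μ)` with lower
bound `−λ` satisfying the first Beurling–Deny criterion, and let `μ' ≥ λ`. If
`f, g ∈ D(q)` are real-valued, then `f ∧ g = min{f,g} ∈ D(q)` and
`‖f ∧ g‖_q² ≤ ‖f‖_q² + ‖g‖_q²`, where `‖·‖_q² = q(·) + μ'·‖·‖²_{L²}`. -/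
theorem stmt4 {X : Type*} [MeasurableSpace X] {μ : Measure X}
    (q : QForm (Lp ℂ 2 μ)) (lam mu' : ℝ)
    (hlb : ∀ f ∈ q.dom, -lam * ‖f‖ ^ 2 ≤ q.Q f) (hmu : lam ≤ mu')
    (hBD : q.BeurlingDeny)
    (f g : Lp ℂ 2 μ) (hf : f ∈ q.dom) (hg : g ∈ q.dom)
    (hfr : ∀ᵐ x ∂μ, (f x).im = 0) (hgr : ∀ᵐ x ∂μ, (g x).im = 0) :
    ∃ h ∈ q.dom, (∀ᵐ x ∂μ, h x = ((min (f x).re (g x).re : ℝ) : ℂ)) ∧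
      q.normSq mu' h ≤ q.normSq mu' f + q.normSq mu' g := by
  set s : Lp ℂ 2 μ := f + g with hs
  set u : Lp ℂ 2 μ := f - g with hu
  have hsmem : s ∈ q.dom := q.dom.add_mem hf hg
  have humem : u ∈ q.dom := q.dom.sub_mem hf hg
  obtain ⟨a, ha, haae, hQa⟩ := hBD.2 u humem
  set h : Lp ℂ 2 μ := (2:ℂ)⁻¹ • (s - a) with hh
  set k : Lp ℂ 2 μ := (2:ℂ)⁻¹ • (s + a) with hk
  have hhmem : h ∈ q.dom := q.dom.smul_mem _ (q.dom.sub_mem hsmem ha)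
  have hkmem : k ∈ q.dom := q.dom.smul_mem _ (q.dom.add_mem hsmem ha)
  have hhk : h + k = s := by rw [hh, hk]; module
  have hhk' : h - k = -a := by rw [hh, hk]; module
  refine ⟨h, hhmem, ?_, ?_⟩
  · -- a.e. statement
    have e1 : ∀ᵐ x ∂μ, h x = (2:ℂ)⁻¹ * ((s - a) x) := by
      filter_upwards [Lp.coeFn_smul ((2:ℂ)⁻¹) (s - a)] with x hx
      simpa using hx
    filter_upwards [e1, Lp.coeFn_sub s a, Lp.coeFn_add f g, Lp.coeFn_sub f g, haae,
      hfr, hgr] with x h1 h2 h3 h4 h5 hfx hgx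
    set p := (f x).re with hp
    set r := (g x).re with hr
    have hfre : f x = (p : ℂ) := Complex.ext rfl (by simpa using hfx)
    have hgre : g x = (r : ℂ) := Complex.ext rfl (by simpa using hgx)
    have hax : a x = (|p - r| : ℝ) := by
      rw [h5, h4]
      simp only [Pi.sub_apply]
      rw [hfre, hgre, ← Complex.ofReal_sub, Complex.norm_real, Real.norm_eq_abs]
    rw [h1, h2]
    simp only [Pi.sub_apply]
    rw [h3]
    simp only [Pi.add_apply]
    rw [hfre, hgre, hax]
    rcases le_total p r with hpr | hpr
    · rw [min_eq_left hpr, abs_of_nonpos (by linarith)]; push_cast; ring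
    · rw [min_eq_right hpr, abs_of_nonneg (by linarith)]; push_cast; ring
  · -- norm inequality
    have hpar1 : q.Q s + q.Q a = 2 * q.Q h + 2 * q.Q k := by
      have := q.parallelogram h hhmem k hkmem
      rw [hhk, hhk'] at this
      have hna : q.Q (-a) = q.Q a := by
        have := q.smul_eq (-1) a ha
        simpa using this
      linarith
    have hpar2 : q.Q s + q.Q u = 2 * q.Q f + 2 * q.Q g := q.parallelogram f hf g hg
    have hna : ‖(-a : Lp ℂ 2 μ)‖ = ‖a‖ := norm_neg a
    have hnorm1 : ‖s‖ * ‖s‖ + ‖a‖ * ‖a‖ = 2 * (‖h‖ * ‖h‖ + ‖k‖ * ‖k‖) := by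
      have := parallelogram_law_with_norm ℂ h k
      rw [hhk, hhk', hna] at this
      linarith
    have hnorm2 : ‖s‖ * ‖s‖ + ‖u‖ * ‖u‖ = 2 * (‖f‖ * ‖f‖ + ‖g‖ * ‖g‖) :=
      by have := parallelogram_law_with_norm ℂ f g; simp only [pow_two] at this; exact this
    have hau : ‖a‖ = ‖u‖ := by
      rw [Lp.norm_def, Lp.norm_def]
      congr 1
      apply eLpNorm_congr_norm_ae
      filter_upwards [haae] with x hx
      rw [hx]
      rw [Complex.norm_real, Real.norm_eq_abs,
        abs_of_nonneg (norm_nonneg _)]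
    have hau2 : ‖a‖ * ‖a‖ = ‖u‖ * ‖u‖ := by rw [hau]
    have hk1 : -mu' * ‖k‖ ^ 2 ≤ q.Q k := by
      have h1 := hlb k hkmem
      nlinarith [sq_nonneg ‖k‖]
    simp only [QForm.normSq, pow_two] at *
    have hNh : ‖h‖ * ‖h‖ = ‖f‖ * ‖f‖ + ‖g‖ * ‖g‖ - ‖k‖ * ‖k‖ := by linarith
    have hmul : mu' * (‖h‖ * ‖h‖) =
        mu' * (‖f‖ * ‖f‖) + mu' * (‖g‖ * ‖g‖) - mu' * (‖k‖ * ‖k‖) := by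
      rw [hNh]; ring
    linarith
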